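/- arXiv:1304.2985 — 2 statements merged into one kernel-verified Lean document; each statement's English description precedes it below -/
import Mathlib

section
/- Let Γ_n : ℝ^d → ℝ be random convex functions and Γ : ℝ^d → ℝ a deterministic convex function with a unique minimizer β₀. If Γ_n(β) → Γ(β) in probability for every fixed β ∈ ℝ^d, then the (measurable selections of) minimizers β̂_n of Γ_n converge in probability to β₀. -/
open MeasureTheory Filter

/-- Helper: if a convex function `f` has a global minimizer `x` with `ε ≤ dist x β₀`, then
there is a point `y` on the sphere of radius `ε` around `β₀` with `f y ≤ f β₀`. -/
lemma aux_sphere_pt {d : ℕ} {f : (Fin d → ℝ) → ℝ} (hf : ConvexOn ℝ Set.univ f)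
    {x β₀ : Fin d → ℝ} (hx : IsMinOn f Set.univ x) {ε : ℝ} (hε : 0 < ε)
    (hd : ε ≤ dist x β₀) :
    ∃ y, dist y β₀ = ε ∧ f y ≤ f β₀ := by
  set D := dist x β₀ with hD
  have hD0 : 0 < D := lt_of_lt_of_le hε hd
  set s : ℝ := ε / D with hs
  have hs0 : 0 < s := div_pos hε hD0
  have hs1 : s ≤ 1 := (div_le_one hD0).2 hd
  refine ⟨(1 - s) • β₀ + s • x, ?_, ?_⟩
  · have h1 : (1 - s) • β₀ + s • x - β₀ = s • (x - β₀) := by module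
    rw [dist_eq_norm, h1, norm_smul, Real.norm_of_nonneg hs0.le, ← dist_eq_norm]
    rw [hs]
    field_simp
    exact hD.symm
  · have h1 := hf.2 (Set.mem_univ β₀) (Set.mem_univ x)
      (by linarith : (0:ℝ) ≤ 1 - s) hs0.le (by ring)
    have h2 : f x ≤ f β₀ := isMinOn_iff.mp hx β₀ (Set.mem_univ _)
    calc f ((1-s) • β₀ + s • x) ≤ (1-s) * f β₀ + s * f x := h1
      _ ≤ (1-s) * f β₀ + s * f β₀ := by nlinarith
      _ = f β₀ := by ring

/-- Deterministic key lemma: closeness of a convex `f` to `g` on a suitable finite set forces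
every minimizer of `f` to be within `ε` of the unique minimizer of `g`. -/
lemma aux_key {d : ℕ} (g : (Fin d → ℝ) → ℝ) (hg : ConvexOn ℝ Set.univ g)
    (β₀ : Fin d → ℝ) (hmin : IsMinOn g Set.univ β₀)
    (huniq : ∀ β, IsMinOn g Set.univ β → β = β₀) {ε : ℝ} (hε : 0 < ε) :
    ∃ (P : Finset (Fin d → ℝ)) (η : ℝ), 0 < η ∧
      ∀ f : (Fin d → ℝ) → ℝ, ConvexOn ℝ Set.univ f →
        (∀ p ∈ P, |f p - g p| ≤ η) →
        ∀ x, IsMinOn f Set.univ x → dist x β₀ < ε := by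
  classical
  by_cases hS : (Metric.sphere β₀ ε).Nonempty
  · -- continuity of g and min over the sphere
    have hcomp : IsCompact (Metric.sphere β₀ ε) := isCompact_sphere _ _
    have hgc : ContinuousOn g (Metric.sphere β₀ ε) :=
      (hg.continuousOn isOpen_univ).mono (Set.subset_univ _)
    obtain ⟨z, hzS, hz⟩ := hcomp.exists_isMinOn hS hgc
    have hzd : dist z β₀ = ε := Metric.mem_sphere.mp hzS
    have hzne : z ≠ β₀ := by
      intro hzz
      rw [hzz, dist_self] at hzd
      exact hε.ne hzd
    set h := g z - g β₀ with hh_def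
    have hgβz : g β₀ ≤ g z := isMinOn_iff.mp hmin z (Set.mem_univ _)
    have hh : 0 < h := by
      rcases eq_or_lt_of_le hgβz with he | hl
      · exfalso
        apply hzne
        apply huniq
        exact isMinOn_iff.mpr fun w _ => he ▸ isMinOn_iff.mp hmin w (Set.mem_univ _)
      · simp only [hh_def]; linarith
    -- cube vertices
    set a : Fin d → ℝ := fun i => β₀ i - 2*ε with ha_def
    set b' : Fin d → ℝ := fun i => β₀ i + 2*ε with hb_def
    set V : Set (Fin d → ℝ) := Set.univ.pi fun i => {a i, b' i} with hV_def
    have hVfin : V.Finite := Set.Finite.pi fun i => Set.toFinite _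
    have haV : a ∈ V := fun i _ => Or.inl rfl
    have hVne : hVfin.toFinset.Nonempty := ⟨a, hVfin.mem_toFinset.2 haV⟩
    set M := hVfin.toFinset.sup' hVne g with hM_def
    have hM : g β₀ ≤ M :=
      le_trans (isMinOn_iff.mp hmin a (Set.mem_univ _))
        (Finset.le_sup' g (hVfin.mem_toFinset.2 haV))
    set t : ℝ := min (1/2) (h / (2*(M - g β₀ + 1))) with ht_def
    have ht0 : 0 < t := lt_min (by norm_num) (div_pos hh (by linarith))
    have ht1 : t ≤ 1/2 := min_le_left _ _
    have htM : t * (M - g β₀) ≤ h / 2 := by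
      have h1 : t ≤ h / (2*(M - g β₀ + 1)) := min_le_right _ _
      have hC : 0 < M - g β₀ + 1 := by linarith
      have h2 : t * (M - g β₀ + 1) ≤ (h / (2*(M - g β₀ + 1))) * (M - g β₀ + 1) :=
        mul_le_mul_of_nonneg_right h1 hC.le
      have h3 : (h / (2*(M - g β₀ + 1))) * (M - g β₀ + 1) = h / 2 := by
        field_simp
      nlinarith [ht0]
    set r := t * ε with hr_def
    have hr0 : 0 < r := mul_pos ht0 hε
    obtain ⟨N, hNS, hNfin, hNcov⟩ := hcomp.finite_cover_balls hr0
    refine ⟨insert β₀ (hNfin.toFinset ∪ hVfin.toFinset), h/8, by linarith, ?_⟩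
    intro f hf hclose x hx
    by_contra hcon
    push_neg at hcon
    obtain ⟨y, hyd, hyf⟩ := aux_sphere_pt hf hx hε hcon
    have hyS : y ∈ Metric.sphere β₀ ε := Metric.mem_sphere.mpr hyd
    obtain ⟨v, hvN, hvball⟩ := Set.mem_iUnion₂.mp (hNcov hyS)
    have hvy : dist y v < r := Metric.mem_ball.mp hvball
    set bb := y + t⁻¹ • (v - y) with hbb_def
    have hbbV : bb ∈ convexHull ℝ V := by
      apply mem_convexHull_pi
      intro i _
      rw [convexHull_pair, segment_eq_Icc (by simp only [ha_def, hb_def]; linarith)]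
      have h1 : |y i - β₀ i| ≤ ε := by
        have hle := dist_le_pi_dist y β₀ i
        rw [Real.dist_eq] at hle
        rw [hyd] at hle
        exact hle
      have h2 : |v i - y i| ≤ r := by
        have hle := dist_le_pi_dist v y i
        rw [Real.dist_eq] at hle
        have hvy' : dist v y ≤ r := by rw [dist_comm]; exact hvy.le
        linarith
      have h3 : |t⁻¹ * (v i - y i)| ≤ ε := by
        rw [abs_mul, abs_of_nonneg (inv_nonneg.2 ht0.le)]
        calc t⁻¹ * |v i - y i| ≤ t⁻¹ * r :=
              mul_le_mul_of_nonneg_left h2 (inv_nonneg.2 ht0.le)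
          _ = ε := by rw [hr_def]; field_simp
      have hbbi : bb i = y i + t⁻¹ * (v i - y i) := rfl
      rw [abs_le] at h1 h3
      constructor
      · simp only [ha_def, hbbi]; linarith [h1.1, h3.1]
      · simp only [hb_def, hbbi]; linarith [h1.2, h3.2]
    have hv_comb : (1-t) • y + t • bb = v := by
      have hts : t • (t⁻¹ • (v - y)) = v - y := by
        rw [smul_smul, mul_inv_cancel₀ ht0.ne', one_smul]
      simp only [hbb_def, smul_add, hts]
      module
    have hfv : f v ≤ (1-t) * f y + t * f bb := by
      have := hf.2 (Set.mem_univ y) (Set.mem_univ bb)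
        (by linarith : (0:ℝ) ≤ 1 - t) ht0.le (by ring)
      rw [hv_comb] at this
      exact this
    have hfbb : f bb ≤ M + h/8 := by
      obtain ⟨c, hcV, hc⟩ := hf.exists_ge_of_mem_convexHull (Set.subset_univ V) hbbV
      have hcP : c ∈ insert β₀ (hNfin.toFinset ∪ hVfin.toFinset) :=
        Finset.mem_insert_of_mem (Finset.mem_union_right _ (hVfin.mem_toFinset.2 hcV))
      have hcl := abs_le.mp (hclose c hcP)
      have hgc : g c ≤ M := Finset.le_sup' g (hVfin.mem_toFinset.2 hcV)
      linarith [hc]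
    have hclose_v := abs_le.mp (hclose v
      (Finset.mem_insert_of_mem (Finset.mem_union_left _ (hNfin.mem_toFinset.2 hvN))))
    have hclose_β := abs_le.mp (hclose β₀ (Finset.mem_insert_self _ _))
    have hgv : g β₀ + h ≤ g v := by
      have := isMinOn_iff.mp hz v (hNS hvN)
      simp only [hh_def]
      linarith
    have step1 : f y ≤ g β₀ + h/8 := le_trans hyf (by linarith [hclose_β.1])
    have step2 : f v ≤ (1-t) * (g β₀ + h/8) + t * (M + h/8) := by
      have l1 : (1-t) * f y ≤ (1-t) * (g β₀ + h/8) :=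
        mul_le_mul_of_nonneg_left step1 (by linarith)
      have l2 : t * f bb ≤ t * (M + h/8) :=
        mul_le_mul_of_nonneg_left hfbb ht0.le
      linarith
    have step3 : (1-t) * (g β₀ + h/8) + t * (M + h/8) = g β₀ + h/8 + t * (M - g β₀) := by
      ring
    have final : g β₀ + h - h/8 ≤ g β₀ + h/8 + h/2 := by
      calc g β₀ + h - h/8 ≤ g v - h/8 := by linarith
        _ ≤ f v := by linarith [hclose_v.1]
        _ ≤ g β₀ + h/8 + t * (M - g β₀) := by linarith [step2, step3]
        _ ≤ g β₀ + h/8 + h/2 := by linarith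
    linarith
  · refine ⟨∅, 1, one_pos, fun f hf _ x hx => ?_⟩
    by_contra hcon
    push_neg at hcon
    obtain ⟨y, hy, -⟩ := aux_sphere_pt hf hx hε hcon
    exact hS ⟨y, Metric.mem_sphere.mpr hy⟩

/-- if random convex functions `Γ_n` converge pointwise in probability to a
deterministic convex function `Γ` with unique minimizer `β₀`, then measurable selections
of minimizers of `Γ_n` converge in probability to `β₀`. -/
theorem stmt_6 {Ω : Type*} [MeasurableSpace Ω] (μ : Measure Ω) [IsProbabilityMeasure μ]
    (d : ℕ) (Γn : ℕ → Ω → (Fin d → ℝ) → ℝ) (Γ : (Fin d → ℝ) → ℝ)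
    (β₀ : Fin d → ℝ)
    (hconv : ∀ n ω, ConvexOn ℝ Set.univ (Γn n ω))
    (hΓconv : ConvexOn ℝ Set.univ Γ)
    (hmin : IsMinOn Γ Set.univ β₀)
    (huniq : ∀ β, IsMinOn Γ Set.univ β → β = β₀)
    (hpt : ∀ β : Fin d → ℝ, ∀ ε > (0:ℝ),
      Tendsto (fun n => μ {ω | ε ≤ |Γn n ω β - Γ β|}) atTop (nhds 0))
    (βhat : ℕ → Ω → Fin d → ℝ)
    (hmeas : ∀ n, Measurable (βhat n))
    (hargmin : ∀ n ω, IsMinOn (Γn n ω) Set.univ (βhat n ω)) :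
    ∀ ε > (0:ℝ),
      Tendsto (fun n => μ {ω | ε ≤ dist (βhat n ω) β₀}) atTop (nhds 0) := by
  intro ε hε
  obtain ⟨P, η, hη, hkey⟩ := aux_key Γ hΓconv β₀ hmin huniq hε
  have hsub : ∀ n, {ω | ε ≤ dist (βhat n ω) β₀} ⊆
      ⋃ p ∈ P, {ω | η ≤ |Γn n ω p - Γ p|} := by
    intro n ω hω
    by_contra hc
    simp only [Set.mem_iUnion, Set.mem_setOf_eq, not_exists, not_le] at hc
    have hlt : ∀ p ∈ P, |Γn n ω p - Γ p| ≤ η := by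
      intro p hp
      exact (hc p hp).le
    have := hkey (Γn n ω) (hconv n ω) hlt (βhat n ω) (hargmin n ω)
    exact absurd hω (not_le.2 this)
  have hbound : ∀ n, μ {ω | ε ≤ dist (βhat n ω) β₀} ≤
      ∑ p ∈ P, μ {ω | η ≤ |Γn n ω p - Γ p|} := fun n =>
    (measure_mono (hsub n)).trans (measure_biUnion_finset_le _ _)
  have hsum : Tendsto (fun n => ∑ p ∈ P, μ {ω | η ≤ |Γn n ω p - Γ p|}) atTop (nhds 0) := by
    have := tendsto_finset_sum P (fun p (_ : p ∈ P) => hpt p η hη)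
    simpa using this
  exact tendsto_of_tendsto_of_tendsto_of_le_of_le tendsto_const_nhds hsum
    (fun n => zero_le) hbound
end

section
/- Let H be symmetric positive definite on ℝ^d, Z_n random vectors in ℝ^d with √n Z_n ⇒ ξ (a centered Gaussian), and P_n, P : ℝ^d → ℝ convex with P_n(u) → P(u) for all u and P_n, P nonnegative with P_n(0) = P(0) = 0. Then the minimizers û_n of u ↦ u^⊤ H u − 2√n Z_n^⊤ u + P_n(u) converge in distribution to the minimizer of u ↦ u^⊤ H u − 2 ξ^⊤ u + P(u), provided the latter is a.s. unique. -/
open MeasureTheory Filter ProbabilityTheory Matrix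
section
variable {d : ℕ} (H : Matrix (Fin d) (Fin d) ℝ)

lemma abs_dot_le (v u : Fin d → ℝ) : |v ⬝ᵥ u| ≤ d * ‖v‖ * ‖u‖ := by
  calc |v ⬝ᵥ u| ≤ ∑ i, |v i * u i| := Finset.abs_sum_le_sum_abs _ _
  _ ≤ ∑ _i : Fin d, ‖v‖ * ‖u‖ := by
      refine Finset.sum_le_sum fun i _ => ?_
      rw [abs_mul]
      have h1 : |v i| ≤ ‖v‖ := (Real.norm_eq_abs _) ▸ norm_le_pi_norm v i
      have h2 : |u i| ≤ ‖u‖ := (Real.norm_eq_abs _) ▸ norm_le_pi_norm u i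
      exact mul_le_mul h1 h2 (abs_nonneg _) (norm_nonneg _)
  _ = d * ‖v‖ * ‖u‖ := by simp [mul_assoc]

lemma tendsto_dot {vn wn : ℕ → Fin d → ℝ} {v w : Fin d → ℝ}
    (hv : Tendsto vn atTop (nhds v)) (hw : Tendsto wn atTop (nhds w)) :
    Tendsto (fun n => vn n ⬝ᵥ wn n) atTop (nhds (v ⬝ᵥ w)) := by
  simp only [dotProduct]
  exact tendsto_finset_sum _ fun i _ =>
    ((tendsto_pi_nhds.mp hv i).mul (tendsto_pi_nhds.mp hw i))

lemma cont_dotl (v : Fin d → ℝ) : Continuous fun u : Fin d → ℝ => v ⬝ᵥ u := by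
  simp only [dotProduct]
  exact continuous_finset_sum _ fun i _ => continuous_const.mul (continuous_apply i)



lemma cont_q : Continuous fun u : Fin d → ℝ => u ⬝ᵥ H.mulVec u := by
  simp only [dotProduct, Matrix.mulVec]
  exact continuous_finset_sum _ fun i _ => (continuous_apply i).mul
    (continuous_finset_sum _ fun j _ => continuous_const.mul (continuous_apply j))

lemma q_expand (x y : Fin d → ℝ) (a b : ℝ) :
    (a • x + b • y) ⬝ᵥ H.mulVec (a • x + b • y)
      = a*a*(x ⬝ᵥ H.mulVec x) + a*b*(x ⬝ᵥ H.mulVec y) + a*b*(y ⬝ᵥ H.mulVec x)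
        + b*b*(y ⬝ᵥ H.mulVec y) := by
  simp [Matrix.mulVec_add, Matrix.mulVec_smul, dotProduct_add, add_dotProduct,
    dotProduct_smul, smul_dotProduct, smul_eq_mul]
  ring

lemma q_sub_expand (x y : Fin d → ℝ) :
    (x - y) ⬝ᵥ H.mulVec (x - y)
      = (x ⬝ᵥ H.mulVec x) - (x ⬝ᵥ H.mulVec y) - (y ⬝ᵥ H.mulVec x) + (y ⬝ᵥ H.mulVec y) := by
  simp [Matrix.mulVec_sub, dotProduct_sub, sub_dotProduct]
  ring

lemma q_smul (t : ℝ) (u : Fin d → ℝ) :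
    (t • u) ⬝ᵥ H.mulVec (t • u) = t^2 * (u ⬝ᵥ H.mulVec u) := by
  simp [Matrix.mulVec_smul, dotProduct_smul, smul_dotProduct, smul_eq_mul]
  ring

lemma pd_pos (hHpd : H.PosDef) {x : Fin d → ℝ} (hx : x ≠ 0) : 0 < x ⬝ᵥ H.mulVec x := by
  have := hHpd.dotProduct_mulVec_pos hx
  simpa using this

lemma strictConvex_q (hHpd : H.PosDef) :
    StrictConvexOn ℝ Set.univ fun u : Fin d → ℝ => u ⬝ᵥ H.mulVec u := by
  refine ⟨convex_univ, fun x _ y _ hxy a b ha hb hab => ?_⟩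
  have hq : 0 < (x - y) ⬝ᵥ H.mulVec (x - y) := pd_pos H hHpd (sub_ne_zero.mpr hxy)
  rw [q_sub_expand] at hq
  show (a • x + b • y) ⬝ᵥ H.mulVec (a • x + b • y)
      < a • (x ⬝ᵥ H.mulVec x) + b • (y ⬝ᵥ H.mulVec y)
  rw [q_expand]
  simp only [smul_eq_mul]
  have e : a * (x ⬝ᵥ H.mulVec x) + b * (y ⬝ᵥ H.mulVec y)
      - (a*a*(x ⬝ᵥ H.mulVec x) + a*b*(x ⬝ᵥ H.mulVec y) + a*b*(y ⬝ᵥ H.mulVec x)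
        + b*b*(y ⬝ᵥ H.mulVec y))
      = a*b*((x ⬝ᵥ H.mulVec x) - (x ⬝ᵥ H.mulVec y) - (y ⬝ᵥ H.mulVec x)
        + (y ⬝ᵥ H.mulVec y)) := by
    linear_combination (-(a * (x ⬝ᵥ H.mulVec x) + b * (y ⬝ᵥ H.mulVec y))) * hab
  nlinarith [mul_pos (mul_pos ha hb) hq, e]

lemma convex_lin (v : Fin d → ℝ) :
    ConvexOn ℝ Set.univ fun u : Fin d → ℝ => -(2 * (v ⬝ᵥ u)) := by
  refine ⟨convex_univ, fun x _ y _ a b ha hb hab => le_of_eq ?_⟩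
  show -(2 * (v ⬝ᵥ (a • x + b • y))) = a • -(2 * (v ⬝ᵥ x)) + b • -(2 * (v ⬝ᵥ y))
  simp only [dotProduct_add, dotProduct_smul, smul_eq_mul]
  ring

lemma strictConvex_obj (hHpd : H.PosDef) (v : Fin d → ℝ) {Q : (Fin d → ℝ) → ℝ}
    (hQ : ConvexOn ℝ Set.univ Q) :
    StrictConvexOn ℝ Set.univ
      fun u : Fin d → ℝ => u ⬝ᵥ H.mulVec u - 2 * (v ⬝ᵥ u) + Q u := by
  have h := ((strictConvex_q H hHpd).add_convexOn (convex_lin v)).add_convexOn hQ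
  have heq : (fun u : Fin d → ℝ => u ⬝ᵥ H.mulVec u - 2 * (v ⬝ᵥ u) + Q u)
      = ((fun u : Fin d → ℝ => u ⬝ᵥ H.mulVec u) + fun u => -(2 * (v ⬝ᵥ u))) + Q := by
    funext u
    simp [Pi.add_apply]
    ring
  rw [heq]
  exact h

lemma min_unique (hHpd : H.PosDef) (v : Fin d → ℝ) {Q : (Fin d → ℝ) → ℝ}
    (hQ : ConvexOn ℝ Set.univ Q) {w w' : Fin d → ℝ}
    (h : IsMinOn (fun u => u ⬝ᵥ H.mulVec u - 2 * (v ⬝ᵥ u) + Q u) Set.univ w)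
    (h' : IsMinOn (fun u => u ⬝ᵥ H.mulVec u - 2 * (v ⬝ᵥ u) + Q u) Set.univ w') :
    w' = w :=
  (strictConvex_obj H hHpd v hQ).eq_of_isMinOn h' h (Set.mem_univ _) (Set.mem_univ _)

lemma coercive (hHpd : H.PosDef) :
    ∃ c > 0, ∀ u : Fin d → ℝ, c * ‖u‖^2 ≤ u ⬝ᵥ H.mulVec u := by
  rcases Nat.eq_zero_or_pos d with hd | hd
  · refine ⟨1, one_pos, fun u => ?_⟩
    subst hd
    have hu : u = 0 := Subsingleton.elim _ _
    rw [hu, Matrix.mulVec_zero, dotProduct_zero, norm_zero]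
    norm_num
  · haveI : Nonempty (Fin d) := ⟨⟨0, hd⟩⟩
    have hsc : IsCompact (Metric.sphere (0 : Fin d → ℝ) 1) := isCompact_sphere _ _
    have hsn : (Metric.sphere (0 : Fin d → ℝ) 1).Nonempty := by
      refine ⟨fun _ => 1, ?_⟩
      simp [Metric.mem_sphere, dist_zero_right]
    obtain ⟨w, hws, hwmin⟩ := hsc.exists_isMinOn hsn (cont_q H).continuousOn
    have hw0 : w ≠ 0 := by
      intro h
      rw [Metric.mem_sphere, dist_zero_right, h] at hws
      simp at hws
    refine ⟨w ⬝ᵥ H.mulVec w, pd_pos H hHpd hw0, fun u => ?_⟩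
    rcases eq_or_ne u 0 with h | h
    · simp [h]
    · have hnu : (0:ℝ) < ‖u‖ := norm_pos_iff.mpr h
      have hmem : (‖u‖⁻¹ • u) ∈ Metric.sphere (0 : Fin d → ℝ) 1 := by
        simp [norm_smul, abs_of_pos (inv_pos.mpr hnu), inv_mul_cancel₀ hnu.ne']
      have hle : w ⬝ᵥ H.mulVec w ≤ (‖u‖⁻¹ • u) ⬝ᵥ H.mulVec (‖u‖⁻¹ • u) :=
        isMinOn_iff.mp hwmin _ hmem
      rw [q_smul] at hle
      have hinv : ‖u‖⁻¹ ^ 2 * ‖u‖ ^ 2 = 1 := by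
        field_simp
      have h3 : ‖u‖⁻¹ ^ 2 * (u ⬝ᵥ H.mulVec u) * ‖u‖ ^ 2 = u ⬝ᵥ H.mulVec u := by
        calc ‖u‖⁻¹ ^ 2 * (u ⬝ᵥ H.mulVec u) * ‖u‖ ^ 2
            = (‖u‖⁻¹ ^ 2 * ‖u‖ ^ 2) * (u ⬝ᵥ H.mulVec u) := by ring
        _ = u ⬝ᵥ H.mulVec u := by rw [hinv, one_mul]
      linarith [mul_le_mul_of_nonneg_right hle (sq_nonneg ‖u‖), h3]


end

section
variable {d : ℕ}


/-- auxiliary: the vector with a single nonzero coordinate -/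
def vtx (d : ℕ) (i : Fin d) (c : ℝ) : Fin d → ℝ := fun j => if j = i then c else 0

lemma smul_vtx (a c : ℝ) (i : Fin d) : a • vtx d i c = vtx d i (a * c) := by
  funext j
  simp [vtx, mul_ite]

lemma bound_by_vertices {G : (Fin d → ℝ) → ℝ} (hG : ConvexOn ℝ Set.univ G)
    (hGnn : ∀ u, 0 ≤ G u) (hG0 : G 0 = 0) {r : ℝ} (hr : 0 < r) {x : Fin d → ℝ}
    (hx : ‖x‖ ≤ r) :
    G x ≤ ∑ i : Fin d, (G (vtx d i ((d:ℝ)*r)) + G (vtx d i (-((d:ℝ)*r)))) := by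
  rcases Nat.eq_zero_or_pos d with hd | hd
  · subst hd
    have hx0 : x = 0 := Subsingleton.elim _ _
    rw [hx0, hG0]
    simp
  · have hdpos : (0:ℝ) < d := by exact_mod_cast hd
    have hxsum : (∑ i : Fin d, ((1:ℝ)/d) • vtx d i ((d:ℝ) * x i)) = x := by
      funext j
      simp only [Finset.sum_apply, Pi.smul_apply, smul_eq_mul, vtx,
        mul_ite, mul_one, mul_zero]
      rw [Finset.sum_ite_eq Finset.univ j fun i => (1:ℝ)/d * ((d:ℝ) * x i)]
      simp only [Finset.mem_univ, if_true]
      field_simp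
    have hjensen := hG.map_sum_le (t := Finset.univ)
      (w := fun _ => (1:ℝ)/d) (p := fun i => vtx d i ((d:ℝ) * x i))
      (fun i _ => by positivity)
      (by simp [Finset.sum_const]; field_simp)
      (fun i _ => Set.mem_univ _)
    rw [hxsum] at hjensen
    refine hjensen.trans (Finset.sum_le_sum fun i _ => ?_)
    have hxi : |x i| ≤ r := le_trans ((Real.norm_eq_abs _) ▸ norm_le_pi_norm x i) hx
    set a : ℝ := ((d:ℝ)*r + (d:ℝ)*x i)/(2*(d:ℝ)*r) with ha_def
    set b : ℝ := ((d:ℝ)*r - (d:ℝ)*x i)/(2*(d:ℝ)*r) with hb_def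
    have hdr : (0:ℝ) < (d:ℝ)*r := by positivity
    have ha : 0 ≤ a := by
      apply div_nonneg _ (by positivity)
      nlinarith [abs_le.mp hxi]
    have hb : 0 ≤ b := by
      apply div_nonneg _ (by positivity)
      nlinarith [abs_le.mp hxi]
    have hab : a + b = 1 := by
      rw [ha_def, hb_def, ← add_div, div_eq_one_iff_eq (by positivity)]
      ring
    have hcomb : a • vtx d i ((d:ℝ)*r) + b • vtx d i (-((d:ℝ)*r))
        = vtx d i ((d:ℝ) * x i) := by
      rw [smul_vtx, smul_vtx]
      funext j
      simp only [vtx, Pi.add_apply]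
      split
      · field_simp [ha_def, hb_def]
        rw [ha_def, hb_def]
        field_simp
        ring
      · simp
    have h2 := hG.2 (Set.mem_univ (vtx d i ((d:ℝ)*r)))
      (Set.mem_univ (vtx d i (-((d:ℝ)*r)))) ha hb hab
    rw [hcomb] at h2
    have ha1 : a ≤ 1 := by linarith
    have hb1 : b ≤ 1 := by linarith
    have hle : G (vtx d i ((d:ℝ) * x i))
        ≤ G (vtx d i ((d:ℝ)*r)) + G (vtx d i (-((d:ℝ)*r))) := by
      have g1 := hGnn (vtx d i ((d:ℝ)*r))
      have g2 := hGnn (vtx d i (-((d:ℝ)*r)))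
      have h2' : G (vtx d i ((d:ℝ) * x i))
          ≤ a * G (vtx d i ((d:ℝ)*r)) + b * G (vtx d i (-((d:ℝ)*r))) := by
        simpa [smul_eq_mul] using h2
      nlinarith
    have hGmid := hGnn (vtx d i ((d:ℝ) * x i))
    calc ((1:ℝ)/d) • G (vtx d i ((d:ℝ) * x i))
        ≤ (1:ℝ) * G (vtx d i ((d:ℝ) * x i)) := by
          simp only [smul_eq_mul]
          apply mul_le_mul_of_nonneg_right _ hGmid
          rw [div_le_one hdpos]
          exact_mod_cast hd
    _ = _ := one_mul _
    _ ≤ _ := hle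

lemma unif_bound {Q : ℕ → (Fin d → ℝ) → ℝ} {P : (Fin d → ℝ) → ℝ}
    (hQconv : ∀ n, ConvexOn ℝ Set.univ (Q n)) (hQnn : ∀ n u, 0 ≤ Q n u)
    (hQ0 : ∀ n, Q n 0 = 0)
    (hPconv : ConvexOn ℝ Set.univ P) (hPnn : ∀ u, 0 ≤ P u) (hP0 : P 0 = 0)
    (hQpt : ∀ u, Tendsto (fun n => Q n u) atTop (nhds (P u))) {r : ℝ} (hr : 0 < r) :
    ∃ C : ℝ, 0 ≤ C ∧ (∀ n x, ‖x‖ ≤ r → Q n x ≤ C) ∧ (∀ x, ‖x‖ ≤ r → P x ≤ C) := by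
  set S : ℕ → ℝ := fun n => ∑ i : Fin d,
    (Q n (vtx d i ((d:ℝ)*r)) + Q n (vtx d i (-((d:ℝ)*r)))) with hS
  set SP : ℝ := ∑ i : Fin d,
    (P (vtx d i ((d:ℝ)*r)) + P (vtx d i (-((d:ℝ)*r)))) with hSP
  have hStend : Tendsto S atTop (nhds SP) := by
    apply tendsto_finset_sum
    intro i _
    exact (hQpt _).add (hQpt _)
  obtain ⟨C0, hC0⟩ := hStend.bddAbove_range
  have hSPnn : 0 ≤ SP := Finset.sum_nonneg fun i _ => add_nonneg (hPnn _) (hPnn _)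
  refine ⟨max C0 SP, le_trans hSPnn (le_max_right _ _), fun n x hx => ?_, fun x hx => ?_⟩
  · exact le_trans (bound_by_vertices (hQconv n) (hQnn n) (hQ0 n) hr hx)
      (le_trans (hC0 (Set.mem_range_self n)) (le_max_left _ _))
  · exact le_trans (bound_by_vertices hPconv hPnn hP0 hr hx) (le_max_right _ _)



lemma lip_bound {G : (Fin d → ℝ) → ℝ} (hG : ConvexOn ℝ Set.univ G)
    (hGnn : ∀ u, 0 ≤ G u) {r C : ℝ} (hr : 0 < r)
    (hC : ∀ z : Fin d → ℝ, ‖z‖ ≤ 2*r → G z ≤ C) {x y : Fin d → ℝ}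
    (hx : ‖x‖ ≤ r) (hy : ‖y‖ ≤ r) (hxy : ‖y - x‖ ≤ r) :
    G y ≤ G x + C/r * ‖y - x‖ := by
  have hCnn : 0 ≤ C := le_trans (hGnn 0) (hC 0 (by simp; positivity))
  rcases eq_or_ne y x with h | h
  · rw [h, sub_self, norm_zero, mul_zero, add_zero]
  · have hne : (0:ℝ) < ‖y - x‖ := by
      rw [norm_pos_iff]
      exact sub_ne_zero.mpr h
    set t : ℝ := ‖y - x‖ / r with ht_def
    have ht0 : 0 < t := by positivity
    have ht1 : t ≤ 1 := by
      rw [ht_def, div_le_one hr]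
      exact hxy
    set z : Fin d → ℝ := x + (r / ‖y - x‖) • (y - x) with hz_def
    have hznorm : ‖z‖ ≤ 2*r := by
      calc ‖z‖ ≤ ‖x‖ + ‖(r / ‖y - x‖) • (y - x)‖ := norm_add_le _ _
      _ = ‖x‖ + r := by
          rw [norm_smul, Real.norm_eq_abs, abs_of_pos (by positivity)]
          field_simp
      _ ≤ 2*r := by linarith
    have hy_comb : y = (1 - t) • x + t • z := by
      rw [hz_def, smul_add, smul_smul, ht_def]
      have : ‖y - x‖ / r * (r / ‖y - x‖) = 1 := by
        field_simp
      rw [this, one_smul, ← add_assoc, ← add_smul]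
      simp
    have h2 := hG.2 (Set.mem_univ x) (Set.mem_univ z) (by linarith : (0:ℝ) ≤ 1 - t)
      ht0.le (by ring)
    rw [← hy_comb] at h2
    have hGz : G z ≤ C := hC z hznorm
    calc G y ≤ (1 - t) • G x + t • G z := h2
    _ = G x - t * G x + t * G z := by
        simp only [smul_eq_mul]
        ring
    _ ≤ G x + t * C := by
        have := hGnn x
        nlinarith
    _ = G x + C/r * ‖y - x‖ := by
        rw [ht_def]
        ring

lemma tendsto_penalty {Q : ℕ → (Fin d → ℝ) → ℝ} {P : (Fin d → ℝ) → ℝ}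
    (hQconv : ∀ n, ConvexOn ℝ Set.univ (Q n)) (hQnn : ∀ n u, 0 ≤ Q n u)
    (hQ0 : ∀ n, Q n 0 = 0)
    (hPconv : ConvexOn ℝ Set.univ P) (hPnn : ∀ u, 0 ≤ P u) (hP0 : P 0 = 0)
    (hQpt : ∀ u, Tendsto (fun n => Q n u) atTop (nhds (P u)))
    {wn : ℕ → Fin d → ℝ} {z : Fin d → ℝ} (hw : Tendsto wn atTop (nhds z)) :
    Tendsto (fun n => Q n (wn n)) atTop (nhds (P z)) := by
  set r : ℝ := ‖z‖ + 1 with hr_def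
  have hr : 0 < r := by positivity
  obtain ⟨C, hCnn, hQbd, hPbd⟩ := unif_bound hQconv hQnn hQ0 hPconv hPnn hP0 hQpt
    (r := 2*r) (by positivity)
  rw [tendsto_iff_dist_tendsto_zero]
  have hev : ∀ᶠ n in atTop, ‖wn n - z‖ ≤ 1 := by
    have := Metric.tendsto_atTop.mp hw 1 one_pos
    obtain ⟨N, hN⟩ := this
    exact eventually_atTop.mpr ⟨N, fun n hn => by
      have := hN n hn
      rw [dist_eq_norm] at this
      linarith⟩
  have hbound : ∀ᶠ n in atTop,
      dist (Q n (wn n)) (P z) ≤ C/r * ‖wn n - z‖ + dist (Q n z) (P z) := by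
    filter_upwards [hev] with n hn
    have hxz : ‖z‖ ≤ r := by rw [hr_def]; linarith
    have hwn : ‖wn n‖ ≤ r := by
      calc ‖wn n‖ ≤ ‖z‖ + ‖wn n - z‖ := by
            have := norm_add_le z (wn n - z)
            simpa using this
      _ ≤ r := by rw [hr_def]; linarith
    have hd1 : ‖wn n - z‖ ≤ r := by rw [hr_def]; linarith [norm_nonneg z]
    have h1 : Q n (wn n) ≤ Q n z + C/r * ‖wn n - z‖ :=
      lip_bound (hQconv n) (hQnn n) hr (fun u hu => hQbd n u hu) hxz hwn hd1
    have h2 : Q n z ≤ Q n (wn n) + C/r * ‖z - wn n‖ :=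
      lip_bound (hQconv n) (hQnn n) hr (fun u hu => hQbd n u hu) hwn hxz
        (by rw [← neg_sub, norm_neg]; exact hd1)
    rw [← neg_sub, norm_neg] at h2
    have habs : |Q n (wn n) - Q n z| ≤ C/r * ‖wn n - z‖ := abs_le.mpr ⟨by linarith, by linarith⟩
    calc dist (Q n (wn n)) (P z) ≤ dist (Q n (wn n)) (Q n z) + dist (Q n z) (P z) :=
          dist_triangle _ _ _
    _ ≤ C/r * ‖wn n - z‖ + dist (Q n z) (P z) := by
        rw [Real.dist_eq]
        exact add_le_add_left habs _
  have hlim : Tendsto (fun n => C/r * ‖wn n - z‖ + dist (Q n z) (P z)) atTop (nhds 0) := by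
    have l1 : Tendsto (fun n => ‖wn n - z‖) atTop (nhds 0) := by
      have h0 : Tendsto (fun n => wn n - z) atTop (nhds (z - z)) :=
        hw.sub tendsto_const_nhds
      rw [sub_self] at h0
      simpa using h0.norm
    have l2 : Tendsto (fun n => dist (Q n z) (P z)) atTop (nhds 0) :=
      tendsto_iff_dist_tendsto_zero.mp (hQpt z)
    have := ((l1.const_mul (C/r)).add l2)
    simpa using this
  exact squeeze_zero' (Eventually.of_forall fun n => dist_nonneg) hbound hlim

end
section
variable {d : ℕ} (H : Matrix (Fin d) (Fin d) ℝ)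

lemma exists_min (hHpd : H.PosDef) (v : Fin d → ℝ) {Q : (Fin d → ℝ) → ℝ}
    (hQconv : ConvexOn ℝ Set.univ Q) (hQnn : ∀ u, 0 ≤ Q u) (hQ0 : Q 0 = 0) :
    ∃ w, IsMinOn (fun u => u ⬝ᵥ H.mulVec u - 2 * (v ⬝ᵥ u) + Q u) Set.univ w := by
  obtain ⟨c, hc, hcq⟩ := coercive H hHpd
  set f := fun u : Fin d → ℝ => u ⬝ᵥ H.mulVec u - 2 * (v ⬝ᵥ u) + Q u with hf
  have hfc : Continuous f := by
    have hQc : Continuous Q := by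
      rw [← continuousOn_univ]
      exact hQconv.continuousOn isOpen_univ
    exact ((cont_q H).sub (continuous_const.mul (cont_dotl v))).add hQc
  set ρ : ℝ := (2*(d:ℝ)*‖v‖ + 1)/c with hρ
  have hρpos : 0 < ρ := by positivity
  have hout : ∀ u : Fin d → ℝ, ρ < ‖u‖ → 0 < f u := by
    intro u hu
    have h1 := hcq u
    have h2 : v ⬝ᵥ u ≤ (d:ℝ)*‖v‖*‖u‖ := le_trans (le_abs_self _) (abs_dot_le v u)
    have h3 : 0 ≤ Q u := hQnn u
    have hnu : 0 < ‖u‖ := lt_trans hρpos hu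
    have hcu : 2*(d:ℝ)*‖v‖ + 1 < c*‖u‖ := by
      have : c * ρ < c * ‖u‖ := (mul_lt_mul_iff_right₀ hc).mpr hu
      have hcρ : c * ρ = 2*(d:ℝ)*‖v‖ + 1 := by
        rw [hρ]
        field_simp
      linarith
    have hkey : 0 < ‖u‖ * (c*‖u‖ - 2*(d:ℝ)*‖v‖ - 1) := mul_pos hnu (by linarith)
    simp only [hf]
    nlinarith
  obtain ⟨w, hwK, hwmin⟩ := (isCompact_closedBall (0 : Fin d → ℝ) ρ).exists_isMinOn
    ⟨0, by simp [hρpos.le]⟩ hfc.continuousOn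
  refine ⟨w, isMinOn_iff.mpr fun u _ => ?_⟩
  rcases le_or_gt ‖u‖ ρ with h | h
  · exact isMinOn_iff.mp hwmin u (by simpa [Metric.mem_closedBall, dist_zero_right] using h)
  · have h0 : f w ≤ f 0 := isMinOn_iff.mp hwmin 0 (by simp [hρpos.le])
    have hf0 : f 0 = 0 := by simp [hf, hQ0]
    have := hout u h
    show f w ≤ f u
    linarith

lemma key_conv (hHpd : H.PosDef) {Q : ℕ → (Fin d → ℝ) → ℝ} {P : (Fin d → ℝ) → ℝ}
    (hQconv : ∀ n, ConvexOn ℝ Set.univ (Q n)) (hQnn : ∀ n u, 0 ≤ Q n u)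
    (hQ0 : ∀ n, Q n 0 = 0)
    (hPconv : ConvexOn ℝ Set.univ P) (hPnn : ∀ u, 0 ≤ P u) (hP0 : P 0 = 0)
    (hQpt : ∀ u, Tendsto (fun n => Q n u) atTop (nhds (P u)))
    {vn : ℕ → Fin d → ℝ} {v : Fin d → ℝ} (hv : Tendsto vn atTop (nhds v))
    {wn : ℕ → Fin d → ℝ}
    (hwn : ∀ n, IsMinOn (fun u => u ⬝ᵥ H.mulVec u - 2 * (vn n ⬝ᵥ u) + Q n u) Set.univ (wn n))
    {w : Fin d → ℝ}
    (huniq : ∀ u, IsMinOn (fun u' => u' ⬝ᵥ H.mulVec u' - 2 * (v ⬝ᵥ u') + P u') Set.univ u →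
      u = w) :
    Tendsto wn atTop (nhds w) := by
  obtain ⟨c, hc, hcq⟩ := coercive H hHpd
  obtain ⟨V0, hV0⟩ := (hv.norm).bddAbove_range
  have hVb : ∀ n, ‖vn n‖ ≤ V0 := fun n => hV0 (Set.mem_range_self n)
  have hV0nn : 0 ≤ V0 := le_trans (norm_nonneg _) (hVb 0)
  set R : ℝ := 2*(d:ℝ)*V0/c with hRdef
  have hR : ∀ n, ‖wn n‖ ≤ R := by
    intro n
    have h0 : (wn n) ⬝ᵥ H.mulVec (wn n) - 2*(vn n ⬝ᵥ wn n) + Q n (wn n) ≤ 0 := by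
      have := isMinOn_iff.mp (hwn n) 0 (Set.mem_univ 0)
      simpa [hQ0 n] using this
    have h1 := hcq (wn n)
    have h2 : (vn n) ⬝ᵥ (wn n) ≤ (d:ℝ)*‖vn n‖*‖wn n‖ :=
      le_trans (le_abs_self _) (abs_dot_le _ _)
    have h3 := hQnn n (wn n)
    by_contra hcon
    push_neg at hcon
    have hx : 0 < ‖wn n‖ := lt_of_le_of_lt (by positivity) hcon
    have h4 : 2*(d:ℝ)*V0 < c*‖wn n‖ := by
      rw [hRdef, div_lt_iff₀ hc] at hcon
      linarith
    have h5 : (d:ℝ)*‖vn n‖*‖wn n‖ ≤ (d:ℝ)*V0*‖wn n‖ := by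
      have := mul_le_mul_of_nonneg_right (hVb n) (norm_nonneg (wn n))
      nlinarith [Nat.cast_nonneg (α := ℝ) d]
    nlinarith [mul_pos hx (sub_pos.mpr h4)]
  apply tendsto_of_subseq_tendsto
  intro ns hns
  have hball : ∀ k, wn (ns k) ∈ Metric.closedBall (0 : Fin d → ℝ) R := fun k => by
    simpa [Metric.mem_closedBall, dist_zero_right] using hR (ns k)
  obtain ⟨z, _, φ, hφ, hzt⟩ :=
    tendsto_subseq_of_bounded Metric.isBounded_closedBall hball
  refine ⟨φ, ?_⟩
  have hzt' : Tendsto (fun k => wn (ns (φ k))) atTop (nhds z) := hzt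
  have hm : Tendsto (fun k => ns (φ k)) atTop atTop := hns.comp hφ.tendsto_atTop
  have hvφ : Tendsto (fun k => vn (ns (φ k))) atTop (nhds v) := hv.comp hm
  have hzmin : IsMinOn (fun u' => u' ⬝ᵥ H.mulVec u' - 2 * (v ⬝ᵥ u') + P u') Set.univ z := by
    refine isMinOn_iff.mpr fun u _ => ?_
    have hle : ∀ k, (wn (ns (φ k))) ⬝ᵥ H.mulVec (wn (ns (φ k)))
          - 2*(vn (ns (φ k)) ⬝ᵥ wn (ns (φ k))) + Q (ns (φ k)) (wn (ns (φ k)))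
        ≤ u ⬝ᵥ H.mulVec u - 2*(vn (ns (φ k)) ⬝ᵥ u) + Q (ns (φ k)) u := fun k =>
      isMinOn_iff.mp (hwn _) u (Set.mem_univ u)
    have hQφ : ∀ x, Tendsto (fun k => Q (ns (φ k)) x) atTop (nhds (P x)) :=
      fun x => (hQpt x).comp hm
    have hLHS : Tendsto (fun k => (wn (ns (φ k))) ⬝ᵥ H.mulVec (wn (ns (φ k)))
          - 2*(vn (ns (φ k)) ⬝ᵥ wn (ns (φ k))) + Q (ns (φ k)) (wn (ns (φ k)))) atTop
        (nhds (z ⬝ᵥ H.mulVec z - 2*(v ⬝ᵥ z) + P z)) := by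
      refine Tendsto.add (Tendsto.sub ?_ ?_) ?_
      · exact ((cont_q H).tendsto z).comp hzt'
      · exact (tendsto_dot hvφ hzt').const_mul 2
      · exact tendsto_penalty (fun k => hQconv _) (fun k u => hQnn _ u) (fun k => hQ0 _)
          hPconv hPnn hP0 hQφ hzt'
    have hRHS : Tendsto (fun k => u ⬝ᵥ H.mulVec u - 2*(vn (ns (φ k)) ⬝ᵥ u)
          + Q (ns (φ k)) u) atTop
        (nhds (u ⬝ᵥ H.mulVec u - 2*(v ⬝ᵥ u) + P u)) := by
      refine Tendsto.add (Tendsto.sub tendsto_const_nhds ?_) (hQφ u)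
      exact (tendsto_dot hvφ tendsto_const_nhds).const_mul 2
    exact le_of_tendsto_of_tendsto' hLHS hRHS hle
  rw [show w = z from (huniq z hzmin).symm]
  exact hzt'

end
/-- composite argmin continuous-mapping result. With `H` symmetric positive
definite, `√n Z_n ⇒ ξ` (a centered Gaussian vector), and deterministic convex penalties
`P_n → P` pointwise with `P_n, P ≥ 0`, `P_n(0) = P(0) = 0`, the minimizers `û_n` of
`u ↦ uᵀHu − 2√n Z_nᵀu + P_n(u)` converge in distribution to the (a.s. unique) minimizer
`u*` of `u ↦ uᵀHu − 2ξᵀu + P(u)`. -/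
theorem stmt_19 {Ωs : Type*} [MeasurableSpace Ωs] (μ : Measure Ωs) [IsProbabilityMeasure μ]
    (d : ℕ) (H : Matrix (Fin d) (Fin d) ℝ) (hHsymm : H.IsSymm) (hHpd : H.PosDef)
    (Z : ℕ → Ωs → Fin d → ℝ) (hZmeas : ∀ n, Measurable (Z n))
    (ξ : Ωs → Fin d → ℝ) (hξmeas : Measurable ξ)
    -- ξ is a centered Gaussian vector
    (hξcent : ∀ j, ∫ ω, ξ ω j ∂μ = 0)
    (hξgauss : ∀ l : Fin d → ℝ, ∃ σ : NNReal,
      μ.map (fun ω => l ⬝ᵥ ξ ω) = gaussianReal 0 σ)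
    -- `√n Z_n ⇒ ξ`
    (hweak : ∀ g : BoundedContinuousFunction (Fin d → ℝ) ℝ,
      Tendsto (fun n : ℕ => ∫ ω, g (Real.sqrt n • Z n ω) ∂μ) atTop
        (nhds (∫ ω, g (ξ ω) ∂μ)))
    (Pn : ℕ → (Fin d → ℝ) → ℝ) (P : (Fin d → ℝ) → ℝ)
    (hPnconv : ∀ n, ConvexOn ℝ Set.univ (Pn n)) (hPconv : ConvexOn ℝ Set.univ P)
    (hPnnonneg : ∀ n u, 0 ≤ Pn n u) (hPnonneg : ∀ u, 0 ≤ P u)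
    (hPn0 : ∀ n, Pn n 0 = 0) (hP0 : P 0 = 0)
    (hPpt : ∀ u, Tendsto (fun n => Pn n u) atTop (nhds (P u)))
    (uhat : ℕ → Ωs → Fin d → ℝ) (huhatmeas : ∀ n, Measurable (uhat n))
    (hargmin : ∀ (n : ℕ) ω, IsMinOn
      (fun u => u ⬝ᵥ H.mulVec u - 2 * Real.sqrt n * (Z n ω ⬝ᵥ u) + Pn n u)
      Set.univ (uhat n ω))
    (ustar : Ωs → Fin d → ℝ) (hustarmeas : Measurable ustar)
    (hstar : ∀ᵐ ω ∂μ,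
      IsMinOn (fun u => u ⬝ᵥ H.mulVec u - 2 * (ξ ω ⬝ᵥ u) + P u) Set.univ (ustar ω) ∧
      ∀ u, IsMinOn (fun u' => u' ⬝ᵥ H.mulVec u' - 2 * (ξ ω ⬝ᵥ u') + P u') Set.univ u →
        u = ustar ω) :
    ∀ g : BoundedContinuousFunction (Fin d → ℝ) ℝ,
      Tendsto (fun n : ℕ => ∫ ω, g (uhat n ω) ∂μ) atTop (nhds (∫ ω, g (ustar ω) ∂μ)) := by
  intro g
  classical
  set vZ : ℕ → Ωs → Fin d → ℝ := fun n ω => Real.sqrt n • Z n ω with hvZ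
  have hvZmeas : ∀ n, Measurable (vZ n) := fun n =>
    ((continuous_const_smul (Real.sqrt n)).measurable).comp (hZmeas n)
  -- the limit argmin map
  have hex : ∀ v : Fin d → ℝ, ∃ w,
      IsMinOn (fun u => u ⬝ᵥ H.mulVec u - 2 * (v ⬝ᵥ u) + P u) Set.univ w :=
    fun v => exists_min H hHpd v hPconv hPnonneg hP0
  choose F hF using hex
  have hFuniq : ∀ v u,
      IsMinOn (fun u' => u' ⬝ᵥ H.mulVec u' - 2 * (v ⬝ᵥ u') + P u') Set.univ u → u = F v :=
    fun v u hu => min_unique H hHpd v hPconv (hF v) hu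
  have hFcont : Continuous F := by
    rw [continuous_iff_seqContinuous]
    intro xs x hx
    exact key_conv H hHpd (fun _ => hPconv) (fun _ u => hPnonneg u) (fun _ => hP0)
      hPconv hPnonneg hP0 (fun u => tendsto_const_nhds) hx (fun n => hF (xs n)) (hFuniq x)
  -- the prelimit argmin maps
  have hexn : ∀ (n : ℕ) (v : Fin d → ℝ), ∃ w,
      IsMinOn (fun u => u ⬝ᵥ H.mulVec u - 2 * (v ⬝ᵥ u) + Pn n u) Set.univ w :=
    fun n v => exists_min H hHpd v (hPnconv n) (hPnnonneg n) (hPn0 n)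
  choose Fn hFn using hexn
  have hargmin' : ∀ (n : ℕ) ω, IsMinOn
      (fun u => u ⬝ᵥ H.mulVec u - 2 * (vZ n ω ⬝ᵥ u) + Pn n u) Set.univ (uhat n ω) := by
    intro n ω
    have hfeq : (fun u : Fin d → ℝ =>
        u ⬝ᵥ H.mulVec u - 2 * Real.sqrt n * (Z n ω ⬝ᵥ u) + Pn n u)
        = fun u => u ⬝ᵥ H.mulVec u - 2 * (vZ n ω ⬝ᵥ u) + Pn n u := by
      funext u
      rw [hvZ]
      simp only [smul_dotProduct, smul_eq_mul]
      ring_nf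
    exact hfeq ▸ hargmin n ω
  have huhat_eq : ∀ n ω, uhat n ω = Fn n (vZ n ω) :=
    fun n ω => min_unique H hHpd (vZ n ω) (hPnconv n) (hFn n (vZ n ω)) (hargmin' n ω)
  have hustar_ae : ∀ᵐ ω ∂μ, ustar ω = F (ξ ω) := by
    filter_upwards [hstar] with ω hω
    exact hFuniq (ξ ω) (ustar ω) hω.1
  -- weak convergence as probability measures
  set νs : ℕ → ProbabilityMeasure (Fin d → ℝ) :=
    fun n => ⟨μ.map (vZ n), Measure.isProbabilityMeasure_map (hvZmeas n).aemeasurable⟩ with hνs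
  set ν : ProbabilityMeasure (Fin d → ℝ) :=
    ⟨μ.map ξ, Measure.isProbabilityMeasure_map hξmeas.aemeasurable⟩ with hν
  have hνtend : Tendsto νs atTop (nhds ν) := by
    rw [ProbabilityMeasure.tendsto_iff_forall_integral_tendsto]
    intro f
    have h1 : ∀ n, ∫ x, f x ∂(νs n : Measure (Fin d → ℝ)) = ∫ ω, f (vZ n ω) ∂μ := fun n =>
      integral_map (hvZmeas n).aemeasurable f.continuous.measurable.aestronglyMeasurable
    have h2 : ∫ x, f x ∂(ν : Measure (Fin d → ℝ)) = ∫ ω, f (ξ ω) ∂μ :=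
      integral_map hξmeas.aemeasurable f.continuous.measurable.aestronglyMeasurable
    rw [h2]
    simp only [h1]
    exact hweak f
  -- integrability helper
  have hint : ∀ (h : Ωs → Fin d → ℝ), Measurable h → Integrable (fun ω => g (h ω)) μ := by
    intro h hm
    exact (integrable_const ‖g‖).mono'
      ((g.continuous.measurable.comp hm).aestronglyMeasurable)
      (Eventually.of_forall fun ω => g.norm_coe_le_norm (h ω))
  -- first piece
  have hfirst : Tendsto (fun n => ∫ ω, g (F (vZ n ω)) ∂μ) atTop
      (nhds (∫ ω, g (ustar ω) ∂μ)) := by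
    have h := hweak (g.compContinuous ⟨F, hFcont⟩)
    have e2 : ∫ ω, (g.compContinuous ⟨F, hFcont⟩) (ξ ω) ∂μ = ∫ ω, g (ustar ω) ∂μ := by
      apply integral_congr_ae
      filter_upwards [hustar_ae] with ω hω
      rw [hω]
      rfl
    rw [e2] at h
    exact h
  -- second piece
  have hclosed : ∀ M : ℕ, IsClosed {x : Fin d → ℝ | (M:ℝ) ≤ ‖x‖} :=
    fun M => isClosed_le continuous_const continuous_norm
  have hsecond : Tendsto (fun n => ∫ ω, (g (uhat n ω) - g (F (vZ n ω))) ∂μ) atTop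
      (nhds 0) := by
    rw [NormedAddCommGroup.tendsto_nhds_zero]
    intro ε hε
    have hδpos : (0:ℝ) < ε / (4*(‖g‖+1)) := by positivity
    -- choose a big radius M
    obtain ⟨M, hM⟩ : ∃ M : ℕ, (ν : Measure (Fin d → ℝ)) {x : Fin d → ℝ | (M:ℝ) ≤ ‖x‖}
        < ENNReal.ofReal (ε / (4*(‖g‖+1))) := by
      have hmeas : ∀ M : ℕ, NullMeasurableSet {x : Fin d → ℝ | (M:ℝ) ≤ ‖x‖}
          (ν : Measure (Fin d → ℝ)) :=
        fun M => (hclosed M).measurableSet.nullMeasurableSet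
      have hanti : Antitone (fun M : ℕ => {x : Fin d → ℝ | (M:ℝ) ≤ ‖x‖}) := by
        intro M N hMN x hx
        have hx' : (N:ℝ) ≤ ‖x‖ := hx
        have hMN' : (M:ℝ) ≤ (N:ℝ) := by exact_mod_cast hMN
        exact le_trans hMN' hx' 
      have hempty : ⋂ M : ℕ, {x : Fin d → ℝ | (M:ℝ) ≤ ‖x‖} = ∅ := by
        ext x
        simp only [Set.mem_iInter, Set.mem_setOf_eq, Set.mem_empty_iff_false, iff_false,
          not_forall, not_le]
        exact exists_nat_gt ‖x‖
      have h0 := tendsto_measure_iInter_atTop hmeas hanti ⟨0, measure_ne_top _ _⟩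
      rw [hempty, measure_empty] at h0
      have := h0.eventually_lt_const (ENNReal.ofReal_pos.mpr hδpos)
      exact this.exists
    have hlimsup := ProbabilityMeasure.limsup_measure_closed_le_of_tendsto hνtend (hclosed M)
    have hev2 : ∀ᶠ n in atTop, ((νs n : Measure (Fin d → ℝ)) {x : Fin d → ℝ | (M:ℝ) ≤ ‖x‖})
        < ENNReal.ofReal (ε / (4*(‖g‖+1))) :=
      eventually_lt_of_limsup_lt (lt_of_le_of_lt hlimsup hM)
    -- uniform convergence of argmins over the ball of radius M
    have hclaim : ∀ᶠ n in atTop, ∀ vv : Fin d → ℝ, ‖vv‖ ≤ (M:ℝ) →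
        ‖g (Fn n vv) - g (F vv)‖ ≤ ε/4 := by
      by_contra hcon
      rw [Filter.not_eventually] at hcon
      have hcon' : ∃ᶠ n in atTop, ∃ vv : Fin d → ℝ, ‖vv‖ ≤ (M:ℝ) ∧
          ε/4 < ‖g (Fn n vv) - g (F vv)‖ := by
        apply hcon.mono
        intro n hn
        push_neg at hn
        exact hn
      obtain ⟨φ, hφmono, hφ⟩ := Filter.extraction_of_frequently_atTop hcon'
      choose vv hvv1 hvv2 using hφ
      have hball : ∀ k, vv k ∈ Metric.closedBall (0:Fin d → ℝ) M := fun k => by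
        simpa [dist_zero_right] using hvv1 k
      obtain ⟨vlim, _, ψ, hψmono, hψt⟩ :=
        tendsto_subseq_of_bounded Metric.isBounded_closedBall hball
      have hmφψ : Tendsto (fun k => φ (ψ k)) atTop atTop :=
        hφmono.tendsto_atTop.comp hψmono.tendsto_atTop
      have hψt' : Tendsto (fun k => vv (ψ k)) atTop (nhds vlim) := hψt
      have hkey : Tendsto (fun k => Fn (φ (ψ k)) (vv (ψ k))) atTop (nhds (F vlim)) :=
        key_conv H hHpd (fun k => hPnconv _) (fun k u => hPnnonneg _ u) (fun k => hPn0 _)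
          hPconv hPnonneg hP0 (fun u => (hPpt u).comp hmφψ)
          hψt' (fun k => hFn _ _) (hFuniq vlim)
      have hkey2 : Tendsto (fun k => F (vv (ψ k))) atTop (nhds (F vlim)) :=
        (hFcont.tendsto vlim).comp hψt'
      have hdiff : Tendsto (fun k => ‖g (Fn (φ (ψ k)) (vv (ψ k))) - g (F (vv (ψ k)))‖)
          atTop (nhds 0) := by
        have h1 := ((g.continuous.tendsto (F vlim)).comp hkey).sub
          ((g.continuous.tendsto (F vlim)).comp hkey2)
        rw [sub_self] at h1
        simpa using h1.norm
      have hlt := hdiff.eventually_lt_const (by positivity : (0:ℝ) < ε/4)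
      obtain ⟨k, hk⟩ := hlt.exists
      exact absurd (hvv2 (ψ k)) (not_lt.mpr hk.le)
    -- combine
    filter_upwards [hclaim, hev2] with n hn1 hn2
    have hAmeas : MeasurableSet (vZ n ⁻¹' {x : Fin d → ℝ | (M:ℝ) ≤ ‖x‖}) :=
      ((hclosed M).measurableSet).preimage (hvZmeas n)
    have hptwise : ∀ ω, ‖g (uhat n ω) - g (F (vZ n ω))‖
        ≤ ε/4 + Set.indicator (vZ n ⁻¹' {x : Fin d → ℝ | (M:ℝ) ≤ ‖x‖})
            (fun _ => 2*‖g‖) ω := by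
      intro ω
      by_cases hω : vZ n ω ∈ {x : Fin d → ℝ | (M:ℝ) ≤ ‖x‖}
      · rw [Set.indicator_of_mem (Set.mem_preimage.mpr hω)]
        have hb : ‖g (uhat n ω) - g (F (vZ n ω))‖ ≤ 2*‖g‖ := by
          calc ‖g (uhat n ω) - g (F (vZ n ω))‖ ≤ ‖g (uhat n ω)‖ + ‖g (F (vZ n ω))‖ :=
                norm_sub_le _ _
          _ ≤ ‖g‖ + ‖g‖ := add_le_add (g.norm_coe_le_norm _) (g.norm_coe_le_norm _)
          _ = 2*‖g‖ := by ring
        linarith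
      · rw [Set.indicator_of_notMem (fun hh => hω (Set.mem_preimage.mp hh)), add_zero]
        have hnv : ‖vZ n ω‖ ≤ (M:ℝ) := le_of_lt (not_le.mp hω)
        rw [huhat_eq n ω]
        exact hn1 (vZ n ω) hnv
    have hmap : (νs n : Measure (Fin d → ℝ)) {x : Fin d → ℝ | (M:ℝ) ≤ ‖x‖}
        = μ (vZ n ⁻¹' {x : Fin d → ℝ | (M:ℝ) ≤ ‖x‖}) := by
      show (μ.map (vZ n)) _ = _
      exact Measure.map_apply (hvZmeas n) (hclosed M).measurableSet
    have htoReal : (μ (vZ n ⁻¹' {x : Fin d → ℝ | (M:ℝ) ≤ ‖x‖})).toReal ≤ ε / (4*(‖g‖+1)) := by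
      apply ENNReal.toReal_le_of_le_ofReal hδpos.le
      rw [← hmap]
      exact hn2.le
    calc ‖∫ ω, (g (uhat n ω) - g (F (vZ n ω))) ∂μ‖
        ≤ ∫ ω, ‖g (uhat n ω) - g (F (vZ n ω))‖ ∂μ := norm_integral_le_integral_norm _
    _ ≤ ∫ ω, (ε/4 + Set.indicator (vZ n ⁻¹' {x : Fin d → ℝ | (M:ℝ) ≤ ‖x‖})
          (fun _ => 2*‖g‖) ω) ∂μ := by
        apply integral_mono_of_nonneg (Eventually.of_forall fun ω => norm_nonneg _)
          ((integrable_const (ε/4)).add ((integrable_const (2*‖g‖)).indicator hAmeas))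
          (Eventually.of_forall hptwise)
    _ = ε/4 + (μ (vZ n ⁻¹' {x : Fin d → ℝ | (M:ℝ) ≤ ‖x‖})).toReal * (2*‖g‖) := by
        rw [integral_add (integrable_const _) ((integrable_const _).indicator hAmeas)]
        rw [integral_indicator_const _ hAmeas]
        simp [measure_univ, smul_eq_mul, Measure.real_def]
    _ ≤ ε/4 + (ε / (4*(‖g‖+1))) * (2*‖g‖) := by
        have h2g : (0:ℝ) ≤ 2*‖g‖ := by positivity
        have := mul_le_mul_of_nonneg_right htoReal h2g
        linarith
    _ < ε := by
        have hgnn : (0:ℝ) ≤ ‖g‖ := norm_nonneg _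
        have hkey : (ε / (4*(‖g‖+1))) * (2*‖g‖) ≤ ε/2 := by
          rw [div_mul_eq_mul_div, div_le_div_iff₀ (by positivity) (by norm_num)]
          nlinarith
        linarith
  -- combine the two pieces
  have hcomb : Tendsto (fun n => ∫ ω, g (F (vZ n ω)) ∂μ
      + ∫ ω, (g (uhat n ω) - g (F (vZ n ω))) ∂μ) atTop
      (nhds (∫ ω, g (ustar ω) ∂μ + 0)) := hfirst.add hsecond
  rw [add_zero] at hcomb
  have heq : ∀ n, ∫ ω, g (F (vZ n ω)) ∂μ + ∫ ω, (g (uhat n ω) - g (F (vZ n ω))) ∂μ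
      = ∫ ω, g (uhat n ω) ∂μ := by
    intro n
    rw [integral_sub (hint (fun ω => uhat n ω) (huhatmeas n))
      (hint (fun ω => F (vZ n ω)) (hFcont.measurable.comp (hvZmeas n)))]
    ring
  exact hcomb.congr heq
end
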